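/- arXiv:2112.06187 — 2 statements merged into one kernel-verified Lean document; each statement's English description precedes it below -/
import Mathlib

section
/- If n ≥ 1 and n ≡ 8 (mod 24), then the 3-adic valuation of a_n equals 2. -/
def narayana : ℕ → ℕ
  | 0 => 0
  | 1 => 1
  | 2 => 1
  | n + 3 => narayana (n + 2) + narayana n

lemma nar0 : narayana 0 = 0 := rfl
lemma nar1 : narayana 1 = 1 := rfl
lemma nar2 : narayana 2 = 1 := rfl
lemma nar3 : narayana 3 = 1 := by rw [show (3:ℕ) = 0 + 3 from rfl, narayana, nar2, nar0]
lemma nar4 : narayana 4 = 2 := by rw [show (4:ℕ) = 1 + 3 from rfl, narayana, nar3, nar1]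
lemma nar5 : narayana 5 = 3 := by rw [show (5:ℕ) = 2 + 3 from rfl, narayana, nar4, nar2]
lemma nar6 : narayana 6 = 4 := by rw [show (6:ℕ) = 3 + 3 from rfl, narayana, nar5, nar3]
lemma nar7 : narayana 7 = 6 := by rw [show (7:ℕ) = 4 + 3 from rfl, narayana, nar6, nar4]
lemma nar8 : narayana 8 = 9 := by rw [show (8:ℕ) = 5 + 3 from rfl, narayana, nar7, nar5]
lemma nar9 : narayana 9 = 13 := by rw [show (9:ℕ) = 6 + 3 from rfl, narayana, nar8, nar6]
lemma nar10 : narayana 10 = 19 := by rw [show (10:ℕ) = 7 + 3 from rfl, narayana, nar9, nar7]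
lemma nar11 : narayana 11 = 28 := by rw [show (11:ℕ) = 8 + 3 from rfl, narayana, nar10, nar8]
lemma nar12 : narayana 12 = 41 := by rw [show (12:ℕ) = 9 + 3 from rfl, narayana, nar11, nar9]
lemma nar13 : narayana 13 = 60 := by rw [show (13:ℕ) = 10 + 3 from rfl, narayana, nar12, nar10]
lemma nar14 : narayana 14 = 88 := by rw [show (14:ℕ) = 11 + 3 from rfl, narayana, nar13, nar11]
lemma nar15 : narayana 15 = 129 := by rw [show (15:ℕ) = 12 + 3 from rfl, narayana, nar14, nar12]
lemma nar16 : narayana 16 = 189 := by rw [show (16:ℕ) = 13 + 3 from rfl, narayana, nar15, nar13]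
lemma nar17 : narayana 17 = 277 := by rw [show (17:ℕ) = 14 + 3 from rfl, narayana, nar16, nar14]
lemma nar18 : narayana 18 = 406 := by rw [show (18:ℕ) = 15 + 3 from rfl, narayana, nar17, nar15]
lemma nar19 : narayana 19 = 595 := by rw [show (19:ℕ) = 16 + 3 from rfl, narayana, nar18, nar16]
lemma nar20 : narayana 20 = 872 := by rw [show (20:ℕ) = 17 + 3 from rfl, narayana, nar19, nar17]
lemma nar21 : narayana 21 = 1278 := by rw [show (21:ℕ) = 18 + 3 from rfl, narayana, nar20, nar18]
lemma nar22 : narayana 22 = 1873 := by rw [show (22:ℕ) = 19 + 3 from rfl, narayana, nar21, nar19]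
lemma nar23 : narayana 23 = 2745 := by rw [show (23:ℕ) = 20 + 3 from rfl, narayana, nar22, nar20]
lemma nar24 : narayana 24 = 4023 := by rw [show (24:ℕ) = 21 + 3 from rfl, narayana, nar23, nar21]
lemma nar25 : narayana 25 = 5896 := by rw [show (25:ℕ) = 22 + 3 from rfl, narayana, nar24, nar22]
lemma nar26 : narayana 26 = 8641 := by rw [show (26:ℕ) = 23 + 3 from rfl, narayana, nar25, nar23]
lemma nar27 : narayana 27 = 12664 := by rw [show (27:ℕ) = 24 + 3 from rfl, narayana, nar26, nar24]
lemma nar28 : narayana 28 = 18560 := by rw [show (28:ℕ) = 25 + 3 from rfl, narayana, nar27, nar25]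
lemma nar29 : narayana 29 = 27201 := by rw [show (29:ℕ) = 26 + 3 from rfl, narayana, nar28, nar26]
lemma nar30 : narayana 30 = 39865 := by rw [show (30:ℕ) = 27 + 3 from rfl, narayana, nar29, nar27]
lemma nar31 : narayana 31 = 58425 := by rw [show (31:ℕ) = 28 + 3 from rfl, narayana, nar30, nar28]
lemma nar32 : narayana 32 = 85626 := by rw [show (32:ℕ) = 29 + 3 from rfl, narayana, nar31, nar29]
lemma nar33 : narayana 33 = 125491 := by rw [show (33:ℕ) = 30 + 3 from rfl, narayana, nar32, nar30]
lemma nar34 : narayana 34 = 183916 := by rw [show (34:ℕ) = 31 + 3 from rfl, narayana, nar33, nar31]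
lemma nar35 : narayana 35 = 269542 := by rw [show (35:ℕ) = 32 + 3 from rfl, narayana, nar34, nar32]
lemma nar36 : narayana 36 = 395033 := by rw [show (36:ℕ) = 33 + 3 from rfl, narayana, nar35, nar33]
lemma nar37 : narayana 37 = 578949 := by rw [show (37:ℕ) = 34 + 3 from rfl, narayana, nar36, nar34]
lemma nar38 : narayana 38 = 848491 := by rw [show (38:ℕ) = 35 + 3 from rfl, narayana, nar37, nar35]
lemma nar39 : narayana 39 = 1243524 := by rw [show (39:ℕ) = 36 + 3 from rfl, narayana, nar38, nar36]
lemma nar40 : narayana 40 = 1822473 := by rw [show (40:ℕ) = 37 + 3 from rfl, narayana, nar39, nar37]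
lemma nar41 : narayana 41 = 2670964 := by rw [show (41:ℕ) = 38 + 3 from rfl, narayana, nar40, nar38]
lemma nar42 : narayana 42 = 3914488 := by rw [show (42:ℕ) = 39 + 3 from rfl, narayana, nar41, nar39]
lemma nar43 : narayana 43 = 5736961 := by rw [show (43:ℕ) = 40 + 3 from rfl, narayana, nar42, nar40]
lemma nar44 : narayana 44 = 8407925 := by rw [show (44:ℕ) = 41 + 3 from rfl, narayana, nar43, nar41]
lemma nar45 : narayana 45 = 12322413 := by rw [show (45:ℕ) = 42 + 3 from rfl, narayana, nar44, nar42]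
lemma nar46 : narayana 46 = 18059374 := by rw [show (46:ℕ) = 43 + 3 from rfl, narayana, nar45, nar43]
lemma nar47 : narayana 47 = 26467299 := by rw [show (47:ℕ) = 44 + 3 from rfl, narayana, nar46, nar44]
lemma nar48 : narayana 48 = 38789712 := by rw [show (48:ℕ) = 45 + 3 from rfl, narayana, nar47, nar45]
lemma nar49 : narayana 49 = 56849086 := by rw [show (49:ℕ) = 46 + 3 from rfl, narayana, nar48, nar46]
lemma nar50 : narayana 50 = 83316385 := by rw [show (50:ℕ) = 47 + 3 from rfl, narayana, nar49, nar47]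
lemma nar51 : narayana 51 = 122106097 := by rw [show (51:ℕ) = 48 + 3 from rfl, narayana, nar50, nar48]
lemma nar52 : narayana 52 = 178955183 := by rw [show (52:ℕ) = 49 + 3 from rfl, narayana, nar51, nar49]
lemma nar53 : narayana 53 = 262271568 := by rw [show (53:ℕ) = 50 + 3 from rfl, narayana, nar52, nar50]
lemma nar54 : narayana 54 = 384377665 := by rw [show (54:ℕ) = 51 + 3 from rfl, narayana, nar53, nar51]
lemma nar55 : narayana 55 = 563332848 := by rw [show (55:ℕ) = 52 + 3 from rfl, narayana, nar54, nar52]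
lemma nar56 : narayana 56 = 825604416 := by rw [show (56:ℕ) = 53 + 3 from rfl, narayana, nar55, nar53]
lemma nar57 : narayana 57 = 1209982081 := by rw [show (57:ℕ) = 54 + 3 from rfl, narayana, nar56, nar54]
lemma nar58 : narayana 58 = 1773314929 := by rw [show (58:ℕ) = 55 + 3 from rfl, narayana, nar57, nar55]
lemma nar59 : narayana 59 = 2598919345 := by rw [show (59:ℕ) = 56 + 3 from rfl, narayana, nar58, nar56]
lemma nar60 : narayana 60 = 3808901426 := by rw [show (60:ℕ) = 57 + 3 from rfl, narayana, nar59, nar57]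
lemma nar61 : narayana 61 = 5582216355 := by rw [show (61:ℕ) = 58 + 3 from rfl, narayana, nar60, nar58]
lemma nar62 : narayana 62 = 8181135700 := by rw [show (62:ℕ) = 59 + 3 from rfl, narayana, nar61, nar59]
lemma nar63 : narayana 63 = 11990037126 := by rw [show (63:ℕ) = 60 + 3 from rfl, narayana, nar62, nar60]
lemma nar64 : narayana 64 = 17572253481 := by rw [show (64:ℕ) = 61 + 3 from rfl, narayana, nar63, nar61]
lemma nar65 : narayana 65 = 25753389181 := by rw [show (65:ℕ) = 62 + 3 from rfl, narayana, nar64, nar62]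
lemma nar66 : narayana 66 = 37743426307 := by rw [show (66:ℕ) = 63 + 3 from rfl, narayana, nar65, nar63]
lemma nar67 : narayana 67 = 55315679788 := by rw [show (67:ℕ) = 64 + 3 from rfl, narayana, nar66, nar64]
lemma nar68 : narayana 68 = 81069068969 := by rw [show (68:ℕ) = 65 + 3 from rfl, narayana, nar67, nar65]
lemma nar69 : narayana 69 = 118812495276 := by rw [show (69:ℕ) = 66 + 3 from rfl, narayana, nar68, nar66]
lemma nar70 : narayana 70 = 174128175064 := by rw [show (70:ℕ) = 67 + 3 from rfl, narayana, nar69, nar67]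
lemma nar71 : narayana 71 = 255197244033 := by rw [show (71:ℕ) = 68 + 3 from rfl, narayana, nar70, nar68]
lemma nar72 : narayana 72 = 374009739309 := by rw [show (72:ℕ) = 69 + 3 from rfl, narayana, nar71, nar69]
lemma nar73 : narayana 73 = 548137914373 := by rw [show (73:ℕ) = 70 + 3 from rfl, narayana, nar72, nar70]
lemma nar74 : narayana 74 = 803335158406 := by rw [show (74:ℕ) = 71 + 3 from rfl, narayana, nar73, nar71]

lemma nar_rec (n : ℕ) : narayana (n + 3) = narayana (n + 2) + narayana n := by rw [narayana]

lemma per : ∀ n, narayana (n + 72) % 27 = narayana n % 27 := by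
  intro n
  induction n using Nat.strong_induction_on with
  | _ n ih =>
    match n with
    | 0 => rw [nar72, nar0]
    | 1 => rw [nar73, nar1]
    | 2 => rw [nar74, nar2]
    | (m + 3) =>
      have h1 := ih (m + 2) (by omega)
      have h2 := ih m (by omega)
      have e1 : narayana (m + 3 + 72) = narayana (m + 2 + 72) + narayana (m + 72) := by
        have := nar_rec (m + 72)
        rw [show m + 72 + 3 = m + 3 + 72 from by omega, show m + 72 + 2 = m + 2 + 72 from by omega] at this
        exact this
      have e2 : narayana (m + 3) = narayana (m + 2) + narayana m := nar_rec m
      omega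

lemma per_mul : ∀ q r, narayana (72 * q + r) % 27 = narayana r % 27 := by
  intro q
  induction q with
  | zero => intro r; norm_num
  | succ k ih =>
    intro r
    rw [show 72 * (k + 1) + r = 72 * k + r + 72 from by ring, per (72 * k + r)]
    exact ih r

theorem narayana_val_two (n : ℕ) (hn : 1 ≤ n) (h : n % 24 = 8) :
    padicValNat 3 (narayana n) = 2 := by
  have key : narayana n % 27 = 9 := by
    have hr : narayana (n % 72) % 27 = 9 := by
      have : n % 72 = 8 ∨ n % 72 = 32 ∨ n % 72 = 56 := by omega
      rcases this with h' | h' | h' <;> rw [h']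
      · rw [nar8]
      · rw [nar32]
      · rw [nar56]
    calc narayana n % 27 = narayana (72 * (n / 72) + n % 72) % 27 := by rw [Nat.div_add_mod]
    _ = narayana (n % 72) % 27 := per_mul _ _
    _ = 9 := hr
  obtain ⟨k, hk⟩ : ∃ k, narayana n = 27 * k + 9 := ⟨narayana n / 27, by omega⟩
  have h9 : narayana n = 9 * (3 * k + 1) := by omega
  rw [h9]
  have : Fact (Nat.Prime 3) := ⟨by norm_num⟩
  rw [padicValNat.mul (by norm_num) (by omega), show (9:ℕ) = 3 ^ 2 from rfl,
    padicValNat.prime_pow, padicValNat.eq_zero_of_not_dvd (by omega)]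
end

section
/- If n ≥ 1 and n ≡ 23 (mod 24), then ν_3(a_n) = ν_3(n+1) + 1, where ν_3 denotes the 3-adic valuation. -/
namespace NarayanaAux

abbrev Mat := Matrix (Fin 3) (Fin 3) ℤ

def M : Mat := !![1,0,1;1,0,0;0,1,0]
def N : Mat := !![4,2,3;3,1,2;2,1,1]

lemma M3 : M^3 = M^2 + 1 := by decide
lemma M8 : M^8 = 1 + (3:ℤ) • N := by decide

lemma cube {A : Type*} [Ring A] (x : A) :
    (1+x)^3 = 1 + (x + x + x) + (x^2 + x^2 + x^2) + x^3 := by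
  noncomm_ring

lemma entry (k : ℕ) : (M^(k+1)) 2 0 = (narayana k : ℤ) := by
  induction k using Nat.strong_induction_on with
  | _ k ih =>
    match k with
    | 0 => show (M^1) 2 0 = _; norm_num [narayana]; decide
    | 1 => show (M^2) 2 0 = _; norm_num [narayana]; decide
    | 2 => show (M^3) 2 0 = _; norm_num [narayana]; decide
    | (k+3) =>
      have h1 : M^(k+3+1) = M^(k+2+1) + M^(k+1) := by
        have h2 : M^(k+3+1) = M^(k+1) * M^3 := by rw [← pow_add]
        rw [h2, M3, mul_add, mul_one, ← pow_add]
      rw [h1]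
      have e1 := ih (k+2) (by omega)
      have e2 := ih k (by omega)
      simp only [Matrix.add_apply, e1, e2, narayana]
      push_cast
      ring

lemma pow_83 (j : ℕ) : ∃ R : Mat, M^(8 * 3^j) = 1 + ((3:ℤ)^(j+1)) • N + ((3:ℤ)^(j+2)) • R := by
  induction j with
  | zero => exact ⟨0, by simpa using M8⟩
  | succ j ih =>
    obtain ⟨R, hR⟩ := ih
    refine ⟨R + (3:ℤ)^j • (N + (3:ℤ)•R)^2 + (3:ℤ)^(2*j) • (N + (3:ℤ)•R)^3, ?_⟩
    have h1 : M^(8 * 3^(j+1)) = (M^(8 * 3^j))^3 := by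
      rw [← pow_mul]; congr 1; ring
    have h2 : (1:Mat) + (3:ℤ)^(j+1) • N + (3:ℤ)^(j+2) • R
        = 1 + (3:ℤ)^(j+1) • (N + (3:ℤ)•R) := by
      match_scalars <;> ring
    rw [h1, hR, h2, cube, smul_pow, smul_pow]
    match_scalars <;> ring

lemma pow_83t (j : ℕ) : ∀ t : ℕ, ∃ S : Mat,
    M^(8 * 3^j * t) = 1 + ((t:ℤ) * (3:ℤ)^(j+1)) • N + ((3:ℤ)^(j+2)) • S := by
  obtain ⟨R, hR⟩ := pow_83 j
  intro t
  induction t with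
  | zero => exact ⟨0, by simp⟩
  | succ t ih =>
    obtain ⟨S, hS⟩ := ih
    refine ⟨R + ((t:ℤ)*3^j) • (N*N) + ((t:ℤ)*3^(j+1)) • (N*R) + S
        + (3:ℤ)^(j+1) • (S*N) + (3:ℤ)^(j+2) • (S*R), ?_⟩
    have h1 : M^(8 * 3^j * (t+1)) = M^(8 * 3^j * t) * M^(8 * 3^j) := by
      rw [mul_add, mul_one, pow_add]
    rw [h1, hS, hR]
    simp only [add_mul, mul_add, one_mul, mul_one, smul_mul_assoc, mul_smul_comm, smul_smul]
    push_cast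
    match_scalars <;> ring

/-- key congruence : if n+1 = 8 * 3^(e+1) * t then
narayana n = 2*t*3^(e+2) + 3^(e+3)*s for some integer s -/
lemma key (e t n : ℕ) (hn : n + 1 = 8 * 3^(e+1) * t) :
    ∃ s : ℤ, (narayana n : ℤ) = 2 * t * 3^(e+2) + 3^(e+3) * s := by
  obtain ⟨S, hS⟩ := pow_83t (e+1) t
  refine ⟨S 2 0, ?_⟩
  have h1 : (M^(n+1)) 2 0 = (narayana n : ℤ) := entry n
  rw [hn, hS] at h1
  rw [← h1]
  have h2 : N 2 0 = 2 := by decide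
  simp only [Matrix.add_apply, Matrix.smul_apply, h2, smul_eq_mul,
    Matrix.one_apply_ne (show (2:Fin 3) ≠ 0 by decide)]
  ring

end NarayanaAux

theorem narayana_val_23 (n : ℕ) (hn : 1 ≤ n) (h : n % 24 = 23) :
    padicValNat 3 (narayana n) = padicValNat 3 (n + 1) + 1 := by
  have h24 : n + 1 = 24 * ((n+1)/24) := by omega
  set K := (n+1)/24 with hK
  have hKpos : K ≠ 0 := by omega
  set e := K.factorization 3 with he
  set t := K / 3^e with ht
  have hKe : 3^e * t = K := Nat.ordProj_mul_ordCompl_eq_self K 3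
  have h3t : ¬ (3 ∣ t) := Nat.not_dvd_ordCompl Nat.prime_three hKpos
  have htpos : t ≠ 0 := by
    intro h0
    rw [h0, mul_zero] at hKe
    exact hKpos hKe.symm
  have hfact : n + 1 = 8 * 3^(e+1) * t := by
    rw [h24, ← hKe]; ring
  obtain ⟨s, hs⟩ := NarayanaAux.key e t n hfact
  haveI : Fact (Nat.Prime 3) := ⟨Nat.prime_three⟩
  -- divisibility facts for narayana n
  have hd1 : (3:ℕ)^(e+2) ∣ narayana n := by
    have : ((3:ℤ))^(e+2) ∣ (narayana n : ℤ) := ⟨2*t + 3*s, by rw [hs]; ring⟩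
    exact_mod_cast Int.natCast_dvd_natCast.mp (by exact_mod_cast this)
  have hd2 : ¬ (3:ℕ)^(e+3) ∣ narayana n := by
    intro hdvd
    have hz : ((3:ℤ))^(e+3) ∣ (narayana n : ℤ) := by exact_mod_cast Int.natCast_dvd_natCast.mpr hdvd
    have : ((3:ℤ))^(e+3) ∣ 2 * t * 3^(e+2) := by
      have := dvd_sub hz (Dvd.intro s rfl)
      rw [hs] at this
      simpa using this
    have h3div : (3:ℤ) ∣ 2 * t := by
      have h1 : ((3:ℤ))^(e+2) * 3 ∣ (3:ℤ)^(e+2) * (2*t) := by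
        rw [mul_comm ((3:ℤ)^(e+2)) (2*(t:ℤ))]
        calc ((3:ℤ))^(e+2) * 3 = 3^(e+3) := by ring
        _ ∣ 2 * t * 3^(e+2) := this
      exact (mul_dvd_mul_iff_left (by positivity : ((3:ℤ))^(e+2) ≠ 0)).mp h1
    have : (3:ℕ) ∣ 2 * t := by exact_mod_cast Int.natCast_dvd_natCast.mp (by exact_mod_cast h3div)
    rcases (Nat.Prime.dvd_mul Nat.prime_three).mp this with h' | h'
    · omega
    · exact h3t h'
  have hNz : narayana n ≠ 0 := by
    rintro hz; exact hd2 (hz ▸ dvd_zero _)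
  -- valuation of narayana n
  have hv1 : padicValNat 3 (narayana n) = e + 2 := by
    have l1 : e + 2 ≤ padicValNat 3 (narayana n) := (padicValNat_dvd_iff_le hNz).mp hd1
    have l2 : ¬ (e + 3 ≤ padicValNat 3 (narayana n)) := fun hle =>
      hd2 ((padicValNat_dvd_iff_le hNz).mpr hle)
    omega
  -- valuation of n+1
  have hv2 : padicValNat 3 (n+1) = e + 1 := by
    have d1 : (3:ℕ)^(e+1) ∣ n + 1 := ⟨8*t, by rw [hfact]; ring⟩
    have d2 : ¬ (3:ℕ)^(e+2) ∣ n + 1 := by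
      intro hdvd
      rw [hfact] at hdvd
      have : (3:ℕ)^(e+1) * 3 ∣ 3^(e+1) * (8*t) := by
        calc (3:ℕ)^(e+1) * 3 = 3^(e+2) := by ring
        _ ∣ 8 * 3^(e+1) * t := hdvd
        _ = 3^(e+1) * (8*t) := by ring
      have h3 : (3:ℕ) ∣ 8 * t := (Nat.mul_dvd_mul_iff_left (by positivity)).mp this
      rcases (Nat.Prime.dvd_mul Nat.prime_three).mp h3 with h' | h'
      · omega
      · exact h3t h'
    have l1 : e + 1 ≤ padicValNat 3 (n+1) := (padicValNat_dvd_iff_le (by omega)).mp d1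
    have l2 : ¬ (e + 2 ≤ padicValNat 3 (n+1)) := fun hle =>
      d2 ((padicValNat_dvd_iff_le (by omega)).mpr hle)
    omega
  rw [hv1, hv2]
end
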